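/- arXiv:1504.00264 — 3 statements merged into one kernel-verified Lean document; each statement's English description precedes it below -/
import Mathlib

section
/- Let q be a prime power and m ≥ 1. The number of tuples (c₁, …, c_m, a₁, …, a_m) ∈ 𝔽_{q²}^{2m} satisfying a_i^q + a_i = Σ_{j=1}^{i−1} c_j c_{i−j}^q for all i = 1, …, m is exactly q^{3m}. -/
open Finset Polynomial

/-- The number of roots in a finite field of `X^n - c·X` is at most `n` (for `n > 1`). -/
lemma card_pow_eq_mul_le {K : Type*} [Field K] [Fintype K] [DecidableEq K]
    (n : ℕ) (hn : 1 < n) (c : K) :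
    (Finset.univ.filter fun x : K => x ^ n = c * x).card ≤ n := by
  set P : K[X] := X ^ n - C c * X with hP
  have hdegCX : (C c * X : K[X]).natDegree < (X ^ n : K[X]).natDegree := by
    have h1 : (C c * X : K[X]).natDegree ≤ 1 := (natDegree_C_mul_le c X).trans (le_of_eq natDegree_X)
    rw [natDegree_X_pow]
    exact lt_of_le_of_lt h1 hn
  have hdeg : P.natDegree = n := by
    rw [hP, natDegree_sub_eq_left_of_natDegree_lt hdegCX, natDegree_X_pow]
  have hP0 : P ≠ 0 := by
    intro h
    rw [h, natDegree_zero] at hdeg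
    omega
  have hsub : (Finset.univ.filter fun x : K => x ^ n = c * x) ⊆ P.roots.toFinset := by
    intro x hx
    simp only [Finset.mem_filter, Finset.mem_univ, true_and] at hx
    rw [Multiset.mem_toFinset, mem_roots hP0]
    simp only [Multiset.mem_toFinset, mem_roots, hP0, ne_eq, not_false_eq_true, true_and,
      IsRoot.def, hP, eval_sub, eval_pow, eval_X, eval_mul, eval_C]
    rw [hx]; ring
  calc (Finset.univ.filter fun x : K => x ^ n = c * x).card
      ≤ P.roots.toFinset.card := Finset.card_le_card hsub
    _ ≤ Multiset.card P.roots := Multiset.toFinset_card_le _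
    _ ≤ P.natDegree := P.card_roots'
    _ = n := hdeg

/-- Extract the characteristic data from the hypotheses. -/
lemma char_aux (q : ℕ) (hq : IsPrimePow q) (K : Type*) [Field K] [Fintype K]
    (hK : Fintype.card K = q ^ 2) :
    ∃ p k : ℕ, p.Prime ∧ 0 < k ∧ p ^ k = q ∧ CharP K p := by
  obtain ⟨p, k, hp, hk, hpk⟩ := hq
  have hpp : p.Prime := hp.nat_prime
  obtain ⟨p', hp'⟩ := CharP.exists K
  haveI := hp'
  obtain ⟨n, hn, hcard⟩ := FiniteField.card K p'
  have hdvd : p ∣ p' ^ (n : ℕ) := by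
    rw [← hcard, hK, ← hpk, ← pow_mul]
    exact dvd_pow_self p (by positivity)
  have : p = p' := (Nat.prime_dvd_prime_iff_eq hpp hn).mp (hpp.dvd_of_dvd_pow hdvd)
  subst this
  exact ⟨p, k, hpp, hk, hpk, hp'⟩

/-- For any `b` fixed by the `q`-power Frobenius, the fiber of `a ↦ a^q + a` over `b`
has exactly `q` elements. -/
lemma fiber_card (q : ℕ) (hq : IsPrimePow q) (K : Type*) [Field K] [Fintype K]
    (hK : Fintype.card K = q ^ 2) (b : K) (hb : b ^ q = b) :
    Nat.card {a : K // a ^ q + a = b} = q := by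
  classical
  obtain ⟨p, k, hpp, hk, hpkq, hchar⟩ := char_aux q hq K hK
  haveI := hchar
  haveI := Fact.mk hpp
  subst hpkq
  have hq1 : 1 < p ^ k := Nat.one_lt_pow hk.ne' hpp.one_lt
  have hq0 : 0 < p ^ k := by omega
  set f : K → K := fun a => a ^ p ^ k + a with hf
  have hfadd : ∀ x y : K, f (x + y) = f x + f y := by
    intro x y
    simp only [hf, add_pow_char_pow]
    ring
  have hq2pow : ∀ x : K, (x ^ p ^ k) ^ p ^ k = x := by
    intro x
    rw [← pow_mul, ← sq, ← hK]
    exact FiniteField.pow_card x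
  set fib : K → Finset K := fun b => Finset.univ.filter fun a => f a = b with hfib
  set Im : Finset K := Finset.univ.image f with hIm
  set Ffix : Finset K := Finset.univ.filter fun x : K => x ^ p ^ k = x with hFfix
  have himg : Im ⊆ Ffix := by
    intro y hy
    simp only [hIm, Finset.mem_image, Finset.mem_univ, true_and] at hy
    obtain ⟨a, rfl⟩ := hy
    simp only [hFfix, Finset.mem_filter, Finset.mem_univ, true_and, hf]
    rw [add_pow_char_pow, hq2pow]
    ring
  have hFfix_le : Ffix.card ≤ p ^ k := by
    have := card_pow_eq_mul_le (K := K) (p ^ k) hq1 1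
    simpa only [one_mul] using this
  have hker_le : (fib 0).card ≤ p ^ k := by
    have := card_pow_eq_mul_le (K := K) (p ^ k) hq1 (-1)
    refine le_trans (le_of_eq ?_) this
    congr 1
    ext x
    simp only [hfib, hf, Finset.mem_filter, Finset.mem_univ, true_and, neg_one_mul]
    constructor
    · intro h; linear_combination h
    · intro h; linear_combination h
  have hsum : ∑ y ∈ Im, (fib y).card = p ^ k * p ^ k := by
    have : (Finset.univ : Finset K).card = ∑ y ∈ Im, (fib y).card :=
      Finset.card_eq_sum_card_fiberwise (fun a _ => Finset.mem_image_of_mem f (Finset.mem_univ a))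
    rw [← this, Finset.card_univ, hK, sq]
  have hconst : ∀ y ∈ Im, (fib y).card = (fib 0).card := by
    intro y hy
    simp only [hIm, Finset.mem_image, Finset.mem_univ, true_and] at hy
    obtain ⟨a0, ha0⟩ := hy
    simp only [hf] at ha0
    refine Finset.card_bij' (fun x _ => x - a0) (fun x _ => x + a0) ?_ ?_ ?_ ?_
    · intro x hx
      simp only [hfib, hf, Finset.mem_filter, Finset.mem_univ, true_and] at hx ⊢
      have h := hfadd (x - a0) a0
      simp only [hf] at h
      rw [sub_add_cancel] at h
      linear_combination hx - ha0 - h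
    · intro x hx
      simp only [hfib, hf, Finset.mem_filter, Finset.mem_univ, true_and] at hx ⊢
      have h := hfadd x a0
      simp only [hf] at h
      linear_combination h + hx + ha0
    · intro x _; ring
    · intro x _; ring
  have hmul : Im.card * (fib 0).card = p ^ k * p ^ k := by
    rw [← hsum, Finset.sum_congr rfl hconst, Finset.sum_const, smul_eq_mul]
  have hIm_le : Im.card ≤ p ^ k := (Finset.card_le_card himg).trans hFfix_le
  have hker_eq : (fib 0).card = p ^ k := by nlinarith [hmul, hIm_le, hker_le, hq0]
  have hIm_eq : Im.card = p ^ k := by nlinarith [hmul, hIm_le, hker_le, hq0]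
  have hIm_Ffix : Im = Ffix := by
    refine Finset.eq_of_subset_of_card_le himg ?_
    rw [hIm_eq]; exact hFfix_le
  have hbIm : b ∈ Im := by
    rw [hIm_Ffix]
    simp only [hFfix, Finset.mem_filter, Finset.mem_univ, true_and]
    exact hb
  rw [Nat.card_eq_fintype_card, Fintype.card_subtype]
  exact (hconst b hbIm).trans hker_eq

/-- Let `q` be a prime power and `m ≥ 1`. The number of tuples
`(c₁, …, c_m, a₁, …, a_m) ∈ 𝔽_{q²}^{2m}` satisfying
`a_i^q + a_i = Σ_{j=1}^{i−1} c_j c_{i−j}^q` for all `i = 1, …, m` is exactly `q^{3m}`.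
Here `𝔽_{q²}` is a finite field `K` with `q²` elements; tuples are modeled with 0-based
indexing (index `k : Fin m` corresponds to subscript `k+1`). -/
theorem stmt2 (q m : ℕ) (hq : IsPrimePow q) (hm : 1 ≤ m) (K : Type*) [Field K] [Fintype K]
    (hK : Fintype.card K = q ^ 2) :
    Nat.card {ca : (Fin m → K) × (Fin m → K) //
        ∀ i : Fin m, (ca.2 i) ^ q + ca.2 i =
          ∑ j : Fin i.val, ca.1 (Fin.castLE i.isLt.le j) *
            (ca.1 ⟨i.val - j.val - 1,
              Nat.lt_of_le_of_lt (Nat.le_trans (Nat.sub_le _ _) (Nat.sub_le _ _)) i.isLt⟩) ^ q}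
      = q ^ (3 * m) := by
  classical
  obtain ⟨p, k, hpp, hk, hpkq, hchar⟩ := char_aux q hq K hK
  haveI := hchar
  haveI := Fact.mk hpp
  have hq2pow : ∀ x : K, (x ^ q) ^ q = x := by
    intro x
    rw [← pow_mul, ← sq, ← hK]
    exact FiniteField.pow_card x
  -- the right-hand-side sums
  set R : (Fin m → K) → (i : Fin m) → K := fun c i =>
    ∑ j : Fin i.val, c (Fin.castLE i.isLt.le j) *
      (c ⟨i.val - j.val - 1,
        Nat.lt_of_le_of_lt (Nat.le_trans (Nat.sub_le _ _) (Nat.sub_le _ _)) i.isLt⟩) ^ q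
    with hR
  have hfix : ∀ (c : Fin m → K) (i : Fin m), (R c i) ^ q = R c i := by
    intro c i
    have hmapsum : ∀ (g : Fin i.val → K), (∑ j, g j) ^ q = ∑ j, (g j) ^ q := by
      intro g
      have := map_sum (iterateFrobenius K p k) g Finset.univ
      simpa only [iterateFrobenius_def, hpkq] using this
    simp only [hR]
    rw [hmapsum]
    have step1 : ∀ j : Fin i.val,
        (c (Fin.castLE i.isLt.le j) *
          (c ⟨i.val - j.val - 1,
            Nat.lt_of_le_of_lt (Nat.le_trans (Nat.sub_le _ _) (Nat.sub_le _ _)) i.isLt⟩) ^ q) ^ q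
        = (c (Fin.castLE i.isLt.le j)) ^ q *
          (c ⟨i.val - j.val - 1,
            Nat.lt_of_le_of_lt (Nat.le_trans (Nat.sub_le _ _) (Nat.sub_le _ _)) i.isLt⟩) := by
      intro j
      rw [mul_pow, hq2pow]
    rw [Finset.sum_congr rfl fun j _ => step1 j]
    rw [← Equiv.sum_comp (Fin.revPerm : Equiv.Perm (Fin i.val)) (fun j : Fin i.val =>
      c (Fin.castLE i.isLt.le j) *
        (c ⟨i.val - j.val - 1,
          Nat.lt_of_le_of_lt (Nat.le_trans (Nat.sub_le _ _) (Nat.sub_le _ _)) i.isLt⟩) ^ q)]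
    refine Finset.sum_congr rfl fun j _ => ?_
    simp only [Fin.revPerm_apply]
    have e1 : c (Fin.castLE i.isLt.le j.rev) =
        c ⟨i.val - j.val - 1,
          Nat.lt_of_le_of_lt (Nat.le_trans (Nat.sub_le _ _) (Nat.sub_le _ _)) i.isLt⟩ := by
      congr 1
      all_goals
        apply Fin.ext
        simp only [Fin.coe_castLE, Fin.val_rev]
        try omega
    have e2 : c (⟨i.val - j.rev.val - 1,
          Nat.lt_of_le_of_lt (Nat.le_trans (Nat.sub_le _ _) (Nat.sub_le _ _)) i.isLt⟩ : Fin m) =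
        c (Fin.castLE i.isLt.le j) := by
      congr 1
      all_goals
        apply Fin.ext
        simp only [Fin.coe_castLE, Fin.val_rev]
        have := j.isLt
        try omega
    rw [e1, e2]
    ring
  -- the equivalence splitting the count
  have e : {ca : (Fin m → K) × (Fin m → K) //
        ∀ i : Fin m, (ca.2 i) ^ q + ca.2 i =
          ∑ j : Fin i.val, ca.1 (Fin.castLE i.isLt.le j) *
            (ca.1 ⟨i.val - j.val - 1,
              Nat.lt_of_le_of_lt (Nat.le_trans (Nat.sub_le _ _) (Nat.sub_le _ _)) i.isLt⟩) ^ q}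
      ≃ ((c : Fin m → K) × (∀ i : Fin m, {a : K // a ^ q + a = R c i})) :=
    { toFun := fun x => ⟨x.1.1, fun i => ⟨x.1.2 i, x.2 i⟩⟩
      invFun := fun s => ⟨(s.1, fun i => (s.2 i).1), fun i => (s.2 i).2⟩
      left_inv := fun x => rfl
      right_inv := fun s => rfl }
  rw [Nat.card_congr e]
  have hcards : ∀ (c : Fin m → K) (i : Fin m), Nat.card {a : K // a ^ q + a = R c i} = q :=
    fun c i => fiber_card q hq K hK (R c i) (hfix c i)
  have hsig : Nat.card ((c : Fin m → K) × (∀ i : Fin m, {a : K // a ^ q + a = R c i}))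
      = ∑ c : Fin m → K, ∏ i : Fin m, Nat.card {a : K // a ^ q + a = R c i} := by
    rw [Nat.card_eq_fintype_card, Fintype.card_sigma]
    refine Finset.sum_congr rfl fun c _ => ?_
    rw [Fintype.card_pi]
    exact Finset.prod_congr rfl fun i _ => (Nat.card_eq_fintype_card).symm
  rw [hsig]
  have : ∀ c : Fin m → K, ∏ i : Fin m, Nat.card {a : K // a ^ q + a = R c i} = q ^ m := by
    intro c
    rw [Finset.prod_congr rfl fun i _ => hcards c i, Finset.prod_const, Finset.card_univ,
      Fintype.card_fin]
  rw [Finset.sum_congr rfl fun c _ => this c, Finset.sum_const, smul_eq_mul, Finset.card_univ,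
    Fintype.card_fun, hK, Fintype.card_fin, ← pow_mul, ← pow_add]
  congr 1
  ring
end

section
/- Let q be an odd prime power, D ∈ 𝔽_q a non-square, and α₀ = [[0,1],[D,0]] ∈ M₂(𝔽_q). Suppose g ∈ GL₂(𝔽_q) is such that g⁻¹·α₀·g − α₀ = [[B₁, B₂],[−B₂·D, −B₁]] for some B₁, B₂ ∈ 𝔽_q. Then, writing g = [[g₁,g₂],[g₃,g₄]], one has g₁ = g₄ and g₃ = g₂·D; in particular g commutes with α₀. -/
/-- Let `q` be an odd prime power, `D ∈ 𝔽_q` a non-square, and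
`α₀ = [[0,1],[D,0]] ∈ M₂(𝔽_q)`. Suppose `g ∈ GL₂(𝔽_q)` satisfies
`g⁻¹·α₀·g − α₀ = [[B₁, B₂],[−B₂·D, −B₁]]` for some `B₁, B₂ ∈ 𝔽_q`. Then, writing
`g = [[g₁,g₂],[g₃,g₄]]`, one has `g₁ = g₄` and `g₃ = g₂·D`; in particular `g`
commutes with `α₀`. -/
theorem stmt11 (q : ℕ) (hq : IsPrimePow q) (hodd : Odd q) (K : Type*) [Field K] [Fintype K]
    (hK : Fintype.card K = q) (D : K) (hD : ¬ ∃ x : K, x ^ 2 = D)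
    (g : Matrix (Fin 2) (Fin 2) K) (hg : IsUnit g.det) (B₁ B₂ : K)
    (h : g⁻¹ * !![0, 1; D, 0] * g - !![0, 1; D, 0] = !![B₁, B₂; -B₂ * D, -B₁]) :
    g 0 0 = g 1 1 ∧ g 1 0 = g 0 1 * D ∧ g * !![0, 1; D, 0] = !![0, 1; D, 0] * g := by
  have hgg : g * g⁻¹ = 1 := Matrix.mul_nonsing_inv g hg
  have key : !![0, 1; D, 0] * g - g * !![0, 1; D, 0] = g * !![B₁, B₂; -B₂ * D, -B₁] := by
    have := congrArg (fun m => g * m) h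
    simp only [Matrix.mul_sub, ← Matrix.mul_assoc, hgg, Matrix.one_mul] at this
    exact this
  have e00 := congrFun (congrFun key 0) 0
  have e01 := congrFun (congrFun key 0) 1
  have e10 := congrFun (congrFun key 1) 0
  have e11 := congrFun (congrFun key 1) 1
  simp [Matrix.mul_apply, Fin.sum_univ_two, Matrix.sub_apply, Matrix.vecMul, dotProduct] at e00 e01 e10 e11
  have hA : B₁ * (g 0 0 - g 1 1) + B₂ * (g 1 0 - g 0 1 * D) = 0 := by
    linear_combination -e00 - e11
  have hB : B₂ * D * (g 0 0 - g 1 1) + B₁ * (g 1 0 - g 0 1 * D) = 0 := by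
    linear_combination -D * e01 - e10
  have h1 : g 0 0 = g 1 1 ∧ g 1 0 = g 0 1 * D := by
    by_cases hz : B₁ ^ 2 - B₂ ^ 2 * D = 0
    · have hB₂ : B₂ = 0 := by
        by_contra hB₂
        exact hD ⟨B₁ / B₂, by field_simp; linear_combination hz⟩
      have hB₁ : B₁ = 0 := by
        have h2 : B₁ ^ 2 = 0 := by linear_combination hz + B₂ * D * hB₂
        exact pow_eq_zero_iff (n := 2) (by norm_num) |>.mp h2
      subst hB₁; subst hB₂
      constructor
      · linear_combination -e01
      · linear_combination e00
    · have hu : (B₁ ^ 2 - B₂ ^ 2 * D) * (g 0 0 - g 1 1) = 0 := by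
        linear_combination B₁ * hA - B₂ * hB
      have hv : (B₁ ^ 2 - B₂ ^ 2 * D) * (g 1 0 - g 0 1 * D) = 0 := by
        linear_combination B₁ * hB - B₂ * D * hA
      constructor
      · have := (mul_eq_zero.mp hu).resolve_left hz
        exact sub_eq_zero.mp this
      · exact sub_eq_zero.mp ((mul_eq_zero.mp hv).resolve_left hz)
  obtain ⟨ha, hc⟩ := h1
  refine ⟨ha, hc, ?_⟩
  ext i j
  fin_cases i <;> fin_cases j <;>
    simp [Matrix.mul_apply, Fin.sum_univ_two, ha, hc] <;> ring
end

section
/- Let q be a power of 2, D ∈ 𝔽_q such that T² + T + D is irreducible over 𝔽_q, and α₀ = [[0,D],[1,1]] ∈ M₂(𝔽_q). Suppose g = [[g₁,g₂],[g₃,g₄]] ∈ GL₂(𝔽_q) is such that g⁻¹·α₀·g − α₀ = [[B₁, B₁ + B₃·D],[B₃, B₁]] for some B₁, B₃ ∈ 𝔽_q. Then g₂ = g₃·D and g₄ = g₁ + g₃; in particular g commutes with α₀. -/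
/-- Let `q` be a power of 2, `D ∈ 𝔽_q` such that `T² + T + D` is irreducible over `𝔽_q`
(equivalently, has no root in `𝔽_q`), and `α₀ = [[0,D],[1,1]] ∈ M₂(𝔽_q)`. Suppose
`g = [[g₁,g₂],[g₃,g₄]] ∈ GL₂(𝔽_q)` satisfies
`g⁻¹·α₀·g − α₀ = [[B₁, B₁ + B₃·D],[B₃, B₁]]` for some `B₁, B₃ ∈ 𝔽_q`. Then
`g₂ = g₃·D` and `g₄ = g₁ + g₃`; in particular `g` commutes with `α₀`. -/
theorem stmt12 (r q : ℕ) (hr : 1 ≤ r) (hq : q = 2 ^ r) (K : Type*) [Field K] [Fintype K]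
    (hK : Fintype.card K = q) (D : K) (hD : ∀ x : K, x ^ 2 + x + D ≠ 0)
    (g : Matrix (Fin 2) (Fin 2) K) (hg : IsUnit g.det) (B₁ B₃ : K)
    (h : g⁻¹ * !![0, D; 1, 1] * g - !![0, D; 1, 1] = !![B₁, B₁ + B₃ * D; B₃, B₁]) :
    g 0 1 = g 1 0 * D ∧ g 1 1 = g 0 0 + g 1 0 ∧
      g * !![0, D; 1, 1] = !![0, D; 1, 1] * g := by
  -- K has characteristic 2
  obtain ⟨p, hp⟩ := CharP.exists K
  obtain ⟨n, hpprime, hcard⟩ := @FiniteField.card K _ _ p hp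
  have hp2 : p = 2 := by
    have hdvd : p ∣ 2 ^ r := by
      rw [← hq, ← hK, hcard]
      exact dvd_pow_self p n.pos.ne'
    exact (Nat.prime_dvd_prime_iff_eq hpprime Nat.prime_two).mp
      (hpprime.dvd_of_dvd_pow hdvd)
  subst hp2
  have h2 : (2 : K) = 0 := by
    have := hp.cast_eq_zero
    exact_mod_cast this
  -- g is a unit as a matrix
  have hgu : IsUnit g := (Matrix.isUnit_iff_isUnit_det g).mpr hg
  -- conjugation preserves determinant
  have hconj : g⁻¹ * !![0, D; 1, 1] * g = !![0, D; 1, 1] + !![B₁, B₁ + B₃ * D; B₃, B₁] :=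
    sub_eq_iff_eq_add'.mp h
  have hdet : (!![0, D; 1, 1] + !![B₁, B₁ + B₃ * D; B₃, B₁]).det
      = (!![0, D; 1, 1] : Matrix (Fin 2) (Fin 2) K).det := by
    rw [← hconj, Matrix.det_conj' hgu]
  have hsum : (!![0, D; 1, 1] + !![B₁, B₁ + B₃ * D; B₃, B₁] : Matrix (Fin 2) (Fin 2) K)
      = !![B₁, D + (B₁ + B₃ * D); 1 + B₃, 1 + B₁] := by
    norm_num [← Matrix.ext_iff, Fin.forall_fin_two]
  rw [hsum, Matrix.det_fin_two_of, Matrix.det_fin_two_of] at hdet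
  -- key equation
  have E : B₁ * B₁ + B₁ * B₃ + D * (B₃ * B₃) = 0 := by
    linear_combination hdet - (D * B₃ - B₃ * B₃ * D) * h2 + (B₁ * B₃ + 2 * B₃ * D) * h2
  have hB3 : B₃ = 0 := by
    by_contra hB3
    apply hD (B₁ * B₃⁻¹)
    field_simp
    linear_combination E
  have hB1 : B₁ = 0 := by
    have : B₁ * B₁ = 0 := by linear_combination E - (B₁ + D * B₃) * hB3
    exact (mul_self_eq_zero).mp this
  subst hB1; subst hB3
  have h0 : g⁻¹ * !![0, D; 1, 1] * g = !![0, D; 1, 1] := by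
    rw [hconj]
    norm_num [← Matrix.ext_iff, Fin.forall_fin_two]
  have hcomm : g * !![0, (D:K); 1, 1] = !![0, (D:K); 1, 1] * g := by
    have h1 : g * (g⁻¹ * !![0, D; 1, 1] * g) = g * !![0, D; 1, 1] := by rw [h0]
    rw [← Matrix.mul_assoc, ← Matrix.mul_assoc, Matrix.mul_nonsing_inv _ hg,
      Matrix.one_mul] at h1
    exact h1.symm
  refine ⟨?_, ?_, hcomm⟩
  · have := congrFun (congrFun hcomm 0) 0
    simp [Matrix.mul_apply, Fin.sum_univ_two] at this
    linear_combination this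
  · have := congrFun (congrFun hcomm 1) 0
    simp [Matrix.mul_apply, Fin.sum_univ_two] at this
    linear_combination this
end
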